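/- Let c₁, c₂, c₃ > 0, T₀ > 0 and 0 < ε ≤ 3c₂²/(16c₁c₃(e^{c₂T₀} - 1)). If A : [0,T₁] → ℝ (T₁ ≤ T₀) is C¹, nonnegative, A(0) = 0, and A'(τ) ≤ c₁ + c₂A(τ) + c₃εA(τ)² on [0,T₁], then A(τ) ≤ 4c₁e^{c₂T₀}/(3c₂) for all τ ∈ [0,T₁]. -/

import Mathlib

set_option maxHeartbeats 1600000 in
theorem stmt12 (c₁ c₂ c₃ T₀ T₁ ε : ℝ)
    (hc₁ : 0 < c₁) (hc₂ : 0 < c₂) (hc₃ : 0 < c₃) (hT₀ : 0 < T₀)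
    (hT₁ : 0 < T₁) (hT₁T₀ : T₁ ≤ T₀)
    (hε : 0 < ε)
    (hεle : ε ≤ 3 * c₂ ^ 2 / (16 * c₁ * c₃ * (Real.exp (c₂ * T₀) - 1)))
    (A : ℝ → ℝ)
    (hA0 : A 0 = 0)
    (hApos : ∀ τ ∈ Set.Icc 0 T₁, 0 ≤ A τ)
    (hAdiff : ∀ τ ∈ Set.Icc 0 T₁, HasDerivAt A (deriv A τ) τ)
    (hAcont : ContinuousOn (deriv A) (Set.Icc 0 T₁))
    (hineq : ∀ τ ∈ Set.Icc 0 T₁,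
      deriv A τ ≤ c₁ + c₂ * A τ + c₃ * ε * (A τ) ^ 2) :
    ∀ τ ∈ Set.Icc 0 T₁, A τ ≤ 4 * c₁ * Real.exp (c₂ * T₀) / (3 * c₂) := by
  obtain ⟨E, hE⟩ : ∃ E : ℝ, E = Real.exp (c₂ * T₀) := ⟨_, rfl⟩
  rw [← hE] at hεle ⊢
  have hE1 : 1 < E := by
    rw [hE]; exact Real.one_lt_exp_iff.mpr (by positivity)
  have hEpos : 0 < E - 1 := by linarith
  -- slack
  obtain ⟨η, hηdef⟩ : ∃ η : ℝ, η = min (c₁ / 3) (c₁ / (2 * (E - 1))) := ⟨_, rfl⟩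
  have hη : 0 < η := by rw [hηdef]; exact lt_min (by positivity) (by positivity)
  have hη1 : η ≤ c₁ / 3 := hηdef ▸ min_le_left _ _
  have hη2 : η * (E - 1) ≤ c₁ / 2 := by
    have h : η ≤ c₁ / (2 * (E - 1)) := hηdef ▸ min_le_right _ _
    have h2 := mul_le_mul_of_nonneg_right h hEpos.le
    calc η * (E - 1) ≤ c₁ / (2 * (E - 1)) * (E - 1) := h2
      _ = c₁ / 2 := by field_simp
  obtain ⟨c, hcdef⟩ : ∃ c : ℝ, c = c₁ + η := ⟨_, rfl⟩
  have hc : 0 < c := by rw [hcdef]; positivity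
  have hc43 : c ≤ 4 * c₁ / 3 := by rw [hcdef]; linarith
  obtain ⟨k, hkdef⟩ : ∃ k : ℝ, k = c₃ * ε / c₂ := ⟨_, rfl⟩
  have hk : 0 < k := by rw [hkdef]; positivity
  have hkc₂ : k * c₂ = c₃ * ε := by rw [hkdef]; field_simp
  -- from the hypothesis on ε
  have hεmul : ε * (16 * c₁ * c₃ * (E - 1)) ≤ 3 * c₂ ^ 2 := by
    have hpos : 0 < 16 * c₁ * c₃ * (E - 1) := by positivity
    calc ε * (16 * c₁ * c₃ * (E - 1))
        ≤ 3 * c₂ ^ 2 / (16 * c₁ * c₃ * (E - 1)) * (16 * c₁ * c₃ * (E - 1)) :=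
          mul_le_mul_of_nonneg_right hεle hpos.le
      _ = 3 * c₂ ^ 2 := by field_simp
  obtain ⟨B, hBdef⟩ : ∃ B : ℝ → ℝ, B = fun τ => c / c₂ * (Real.exp (c₂ * τ) - 1) := ⟨_, rfl⟩
  have hBderiv : ∀ x : ℝ, HasDerivAt B (c + c₂ * B x) x := by
    intro x
    have h1 : HasDerivAt (fun y : ℝ => c₂ * y) (c₂ * 1) x := (hasDerivAt_id x).const_mul c₂
    have h2 : HasDerivAt (fun y : ℝ => Real.exp (c₂ * y)) (Real.exp (c₂ * x) * (c₂ * 1)) x :=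
      (Real.hasDerivAt_exp (c₂ * x)).comp x h1
    have h3 := (h2.sub_const 1).const_mul (c / c₂)
    rw [hBdef]
    refine h3.congr_deriv ?_
    field_simp
    ring
  have hB0 : B 0 = 0 := by rw [hBdef]; simp
  have hBnn : ∀ x ∈ Set.Icc (0:ℝ) T₁, 0 ≤ B x := by
    intro x hx
    have h0 : (1:ℝ) ≤ Real.exp (c₂ * x) := Real.one_le_exp (by nlinarith [hx.1])
    rw [hBdef]
    have h1 : 0 ≤ Real.exp (c₂ * x) - 1 := by linarith
    positivity
  have hBle : ∀ x ∈ Set.Icc (0:ℝ) T₁, B x ≤ c / c₂ * (E - 1) := by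
    intro x hx
    have hxe : Real.exp (c₂ * x) ≤ E := by
      rw [hE]; exact Real.exp_le_exp.mpr (by nlinarith [hx.2])
    rw [hBdef]
    have h1 : (0:ℝ) ≤ c / c₂ := by positivity
    nlinarith
  have hkB : ∀ x ∈ Set.Icc (0:ℝ) T₁, k * B x ≤ 1 / 4 := by
    intro x hx
    have h1 : k * B x ≤ k * (c / c₂ * (E - 1)) :=
      mul_le_mul_of_nonneg_left (hBle x hx) hk.le
    have h5 : k * (c / c₂ * (E - 1)) ≤ 1 / 4 := by
      have key : c₃ * ε * c * (E - 1) ≤ c₂ ^ 2 / 4 := by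
        have hp : (0:ℝ) ≤ c₃ * ε := by positivity
        have h3 : c₃ * ε * c * (E - 1) ≤ c₃ * ε * (4 * c₁ / 3) * (E - 1) := by
          nlinarith [mul_nonneg hp hEpos.le]
        nlinarith
      have heq : k * (c / c₂ * (E - 1)) = c₃ * ε * c * (E - 1) / c₂ ^ 2 := by
        rw [hkdef]; field_simp
      rw [heq, div_le_iff₀ (by positivity : (0:ℝ) < c₂ ^ 2)]
      nlinarith
    linarith
  -- the supersolution
  obtain ⟨C, hCdef⟩ : ∃ C : ℝ → ℝ, C = fun τ => B τ / (1 - k * B τ) := ⟨_, rfl⟩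
  obtain ⟨C', hC'def⟩ : ∃ C' : ℝ → ℝ, C' = fun τ => (c + c₂ * B τ) / (1 - k * B τ) ^ 2 :=
    ⟨_, rfl⟩
  have hden : ∀ x ∈ Set.Icc (0:ℝ) T₁, 3 / 4 ≤ 1 - k * B x := by
    intro x hx; have := hkB x hx; linarith
  have hCderiv : ∀ x ∈ Set.Icc (0:ℝ) T₁, HasDerivAt C (C' x) x := by
    intro x hx
    have hd : 1 - k * B x ≠ 0 := by have := hden x hx; linarith
    have h1 : HasDerivAt (fun τ => 1 - k * B τ) (0 - k * (c + c₂ * B x)) x :=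
      (hasDerivAt_const x (1:ℝ)).sub ((hBderiv x).const_mul k)
    have h2 := (hBderiv x).div h1 hd
    rw [hCdef, hC'def]
    refine h2.congr_deriv ?_
    field_simp
    ring
  have hCcont : ContinuousOn C (Set.Icc 0 T₁) := fun x hx =>
    ((hCderiv x hx).continuousAt).continuousWithinAt
  have hAcont' : ContinuousOn A (Set.Icc 0 T₁) := fun x hx =>
    ((hAdiff x hx).continuousAt).continuousWithinAt
  -- key comparison
  have hcomp : ∀ x ∈ Set.Icc (0:ℝ) T₁, A x ≤ C x := by
    apply image_le_of_deriv_right_lt_deriv_boundary' hAcont'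
      (fun x hx => (hAdiff x (Set.Ico_subset_Icc_self hx)).hasDerivWithinAt)
      (by rw [hA0, hCdef]; simp [hB0])
      hCcont
      (fun x hx => (hCderiv x (Set.Ico_subset_Icc_self hx)).hasDerivWithinAt)
    intro x hx hAC
    have hx' : x ∈ Set.Icc (0:ℝ) T₁ := Set.Ico_subset_Icc_self hx
    have h1 := hineq x hx'
    rw [hAC] at h1
    refine lt_of_le_of_lt h1 ?_
    -- show c₁ + c₂ * C x + c₃ * ε * (C x)^2 < C' x
    have hd : (3:ℝ) / 4 ≤ 1 - k * B x := hden x hx'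
    have hd0 : (0:ℝ) < 1 - k * B x := by linarith
    have hBx : 0 ≤ B x := hBnn x hx'
    have hkBx : k * B x ≤ 1 / 4 := hkB x hx'
    have hCval : C x = B x / (1 - k * B x) := by rw [hCdef]
    have hC'val : C' x = (c + c₂ * B x) / (1 - k * B x) ^ 2 := by rw [hC'def]
    rw [hCval, hC'val, lt_div_iff₀ (by positivity)]
    have expand : (c₁ + c₂ * (B x / (1 - k * B x)) + c₃ * ε * (B x / (1 - k * B x)) ^ 2)
        * (1 - k * B x) ^ 2
        = c₁ * (1 - k * B x) ^ 2 + c₂ * B x * (1 - k * B x) + c₃ * ε * B x ^ 2 := by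
      have hy0 := hd0.ne'
      generalize 1 - k * B x = y at hy0 ⊢
      field_simp
    rw [expand]
    have hc₃ε : c₃ * ε = k * c₂ := hkc₂.symm
    rw [hc₃ε, hcdef]
    -- c₁(1-kB)² + c₂B(1-kB) + k c₂ B² = c₁ + c₂ B - c₁ kB (2 - kB) < c₁ + η + c₂ B
    have h6 : c₁ * (1 - k * B x) ^ 2 + c₂ * B x * (1 - k * B x) + k * c₂ * B x ^ 2
        = c₁ + c₂ * B x - c₁ * (k * B x) * (2 - k * B x) := by ring
    rw [h6]
    have h7 : 0 ≤ c₁ * (k * B x) * (2 - k * B x) :=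
      mul_nonneg (mul_nonneg hc₁.le (mul_nonneg hk.le hBx)) (by linarith)
    linarith
  -- conclude
  intro τ hτ
  have h1 := hcomp τ hτ
  have hd : (3:ℝ) / 4 ≤ 1 - k * B τ := hden τ hτ
  have hBτ : 0 ≤ B τ := hBnn τ hτ
  have hBleτ : B τ ≤ c / c₂ * (E - 1) := hBle τ hτ
  have h2 : C τ ≤ 4 / 3 * B τ := by
    rw [hCdef]
    simp only
    rw [div_le_iff₀ (by linarith)]
    have hkBτ := hkB τ hτ
    nlinarith [mul_nonneg hBτ (by linarith : (0:ℝ) ≤ 1 / 3 - 4 / 3 * (k * B τ))]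
  have h3 : 4 / 3 * B τ ≤ 4 / 3 * (c / c₂ * (E - 1)) := by nlinarith
  have h4 : 4 / 3 * (c / c₂ * (E - 1)) ≤ 4 * c₁ * E / (3 * c₂) := by
    have hce : c * (E - 1) ≤ c₁ * E := by
      rw [hcdef]; nlinarith
    have heq : 4 / 3 * (c / c₂ * (E - 1)) = c * (E - 1) * 4 / (3 * c₂) := by
      field_simp
    rw [heq]
    calc c * (E - 1) * 4 / (3 * c₂) ≤ c₁ * E * 4 / (3 * c₂) := by gcongr
      _ = 4 * c₁ * E / (3 * c₂) := by ring
  calc A τ ≤ C τ := h1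
    _ ≤ 4 / 3 * B τ := h2
    _ ≤ 4 / 3 * (c / c₂ * (E - 1)) := h3
    _ ≤ 4 * c₁ * E / (3 * c₂) := h4
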